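/- arXiv:2202.03178 — 4 statements merged into one kernel-verified Lean document; each statement's English description precedes it below -/
import Mathlib

section
/- For every integer n ≥ 2, the number of permutations f of Z_n such that the map i ↦ |f(i) − i| is a bijection from Z_n onto Z_n (i.e., the number of gracefully labeled functional directed graphs that are a spanning union of disjoint directed cycles) is a multiple of 4. -/
/-- If two commuting involutions `a`, `b` act on a finset `s` without fixed points
(and `a ∘ b` is also fixed-point free on `s`), then `4 ∣ s.card`. -/
lemma aux_four_dvd {X : Type*} [DecidableEq X] (a b : X → X)
    (ha : ∀ x, a (a x) = x) (hb : ∀ x, b (b x) = x) (hab : ∀ x, a (b x) = b (a x))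
    (s : Finset X)
    (hsa : ∀ x ∈ s, a x ∈ s) (hsb : ∀ x ∈ s, b x ∈ s)
    (hfa : ∀ x ∈ s, a x ≠ x) (hfb : ∀ x ∈ s, b x ≠ x) (hfab : ∀ x ∈ s, a (b x) ≠ x) :
    4 ∣ s.card := by
  induction s using Finset.strongInduction with
  | _ s ih =>
  rcases s.eq_empty_or_nonempty with rfl | ⟨x, hx⟩
  · simp
  · have h1 : a x ≠ x := hfa x hx
    have h2 : b x ≠ x := hfb x hx
    have h3 : a (b x) ≠ x := hfab x hx
    have h4 : a x ≠ b x := by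
      intro h
      exact h3 (by rw [← h, ha])
    have h5 : a x ≠ a (b x) := by
      intro h
      have h' := congrArg a h
      rw [ha, ha] at h'
      exact h2 h'.symm
    have h6 : b x ≠ a (b x) := by
      intro h
      have h' := congrArg b h
      rw [hb, ← hab, hb] at h'
      exact h1 h'.symm
    set q : Finset X := {x, a x, b x, a (b x)} with hq
    have hqsub : q ⊆ s := by
      intro y hy
      simp only [hq, Finset.mem_insert, Finset.mem_singleton] at hy
      rcases hy with rfl | rfl | rfl | rfl
      · exact hx
      · exact hsa x hx
      · exact hsb x hx
      · exact hsa _ (hsb x hx)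
    have hqcard : q.card = 4 := by
      rw [hq]
      rw [Finset.card_insert_of_notMem (by
        simp only [Finset.mem_insert, Finset.mem_singleton, not_or]
        exact ⟨fun h => h1 h.symm, fun h => h2 h.symm, fun h => h3 h.symm⟩)]
      rw [Finset.card_insert_of_notMem (by
        simp only [Finset.mem_insert, Finset.mem_singleton, not_or]
        exact ⟨h4, h5⟩)]
      rw [Finset.card_insert_of_notMem (by
        simp only [Finset.mem_singleton]
        exact h6)]
      rw [Finset.card_singleton]
    set t : Finset X := s \ q with ht
    have hmemq : ∀ y, y ∈ q ↔ (y = x ∨ y = a x ∨ y = b x ∨ y = a (b x)) := by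
      intro y; simp [hq]
    have hta : ∀ y ∈ t, a y ∈ t := by
      intro y hy
      rw [ht, Finset.mem_sdiff] at hy ⊢
      refine ⟨hsa y hy.1, fun hmem => hy.2 ?_⟩
      rw [hmemq] at hmem ⊢
      rcases hmem with h | h | h | h
      · right; left; rw [← h, ha]
      · left; have h' := congrArg a h; rwa [ha, ha] at h'
      · right; right; right; rw [← h, ha]
      · right; right; left; have h' := congrArg a h; rwa [ha, ha] at h'
    have htb : ∀ y ∈ t, b y ∈ t := by
      intro y hy
      rw [ht, Finset.mem_sdiff] at hy ⊢
      refine ⟨hsb y hy.1, fun hmem => hy.2 ?_⟩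
      rw [hmemq] at hmem ⊢
      rcases hmem with h | h | h | h
      · right; right; left; rw [← h, hb]
      · right; right; right
        have h' := congrArg b h
        rw [hb] at h'
        rw [h']
        exact (hab x).symm
      · left; have h' := congrArg b h; rwa [hb, hb] at h'
      · right; left
        have h' := congrArg b h
        rw [hb, ← hab, hb] at h'
        exact h'
    have htsub : t ⊂ s := by
      rw [ht]
      refine Finset.sdiff_ssubset hqsub ?_
      exact ⟨x, by simp [hq]⟩
    have hdvd : 4 ∣ t.card :=
      ih t htsub hta htb
        (fun y hy => hfa y (Finset.mem_sdiff.mp hy).1)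
        (fun y hy => hfb y (Finset.mem_sdiff.mp hy).1)
        (fun y hy => hfab y (Finset.mem_sdiff.mp hy).1)
    have hcards : s.card = t.card + 4 := by
      rw [ht, Finset.card_sdiff_of_subset hqsub, hqcard]
      have := Finset.card_le_card hqsub
      omega
    rw [hcards]
    exact Nat.dvd_add hdvd dvd_rfl

lemma image_comp_perm {n : ℕ} (u : Fin n → ℕ) (e : Equiv.Perm (Fin n)) :
    Finset.image (fun i => u (e i)) Finset.univ = Finset.image u Finset.univ := by
  ext y
  simp only [Finset.mem_image, Finset.mem_univ, true_and]
  constructor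
  · rintro ⟨i, hi⟩; exact ⟨e i, hi⟩
  · rintro ⟨j, hj⟩; exact ⟨e.symm j, by simpa using hj⟩

lemma dist_rev {n : ℕ} (a b : Fin n) :
    Nat.dist (a.rev : ℕ) (b.rev : ℕ) = Nat.dist (a : ℕ) (b : ℕ) := by
  have ha := a.is_lt
  have hb := b.is_lt
  simp only [Fin.val_rev, Nat.dist]
  omega

/-- For `n ≥ 2`, the number of permutations `f` of `Z_n` such that
`i ↦ |f(i) − i|` is a bijection of `Z_n` (i.e. the number of gracefully labeled functional
directed graphs which are a spanning union of disjoint directed cycles) is a multiple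
of `4`. -/
theorem stmt_6 (n : ℕ) (hn : 2 ≤ n) :
    4 ∣ Nat.card {f : Equiv.Perm (Fin n) //
      Finset.image (fun i => Nat.dist (f i).val i.val) Finset.univ = Finset.range n} := by
  classical
  rw [Nat.card_eq_fintype_card, Fintype.card_subtype]
  set r : Equiv.Perm (Fin n) := Fin.revPerm with hr
  have hrr : r * r = 1 := by
    ext i
    simp [hr, Fin.rev_rev]
  have hrapp : ∀ i : Fin n, r i = Fin.rev i := fun i => rfl
  have hrr' : ∀ i : Fin n, r (r i) = i := by
    intro i
    have := congrFun (congrArg (fun g : Equiv.Perm (Fin n) => (g : Fin n → Fin n)) hrr) i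
    simpa using this
  have hrinv : r⁻¹ = r := by
    rw [eq_comm, eq_inv_iff_mul_eq_one, hrr]
  -- injectivity of the difference map
  have hinj : ∀ f : Equiv.Perm (Fin n),
      Finset.image (fun i => Nat.dist (f i).val i.val) Finset.univ = Finset.range n →
      Function.Injective (fun i : Fin n => Nat.dist (f i).val i.val) := by
    intro f hf
    have hcard : (Finset.image (fun i : Fin n => Nat.dist (f i).val i.val) Finset.univ).card
        = (Finset.univ : Finset (Fin n)).card := by
      rw [hf, Finset.card_range, Finset.card_univ, Fintype.card_fin]
    have h' := Finset.injOn_of_card_image_eq hcard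
    exact fun i j hij => h' (Finset.mem_univ i) (Finset.mem_univ j) hij
  -- closure under inverse
  have hPa : ∀ f : Equiv.Perm (Fin n),
      Finset.image (fun i => Nat.dist (f i).val i.val) Finset.univ = Finset.range n →
      Finset.image (fun i => Nat.dist ((f⁻¹ : Equiv.Perm (Fin n)) i).val i.val) Finset.univ
        = Finset.range n := by
    intro f hf
    rw [← image_comp_perm (fun i => Nat.dist ((f⁻¹ : Equiv.Perm (Fin n)) i).val i.val) f]
    rw [← hf]
    congr 1
    funext i
    show Nat.dist ((f⁻¹ (f i)) : ℕ) ((f i) : ℕ) = Nat.dist ((f i) : ℕ) (i : ℕ)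
    rw [Equiv.Perm.inv_def, Equiv.symm_apply_apply, Nat.dist_comm]
  -- closure under conjugation by reversal
  have hPb : ∀ f : Equiv.Perm (Fin n),
      Finset.image (fun i => Nat.dist (f i).val i.val) Finset.univ = Finset.range n →
      Finset.image (fun i => Nat.dist (((r * f * r) : Equiv.Perm (Fin n)) i).val i.val)
        Finset.univ = Finset.range n := by
    intro f hf
    rw [← image_comp_perm
      (fun i => Nat.dist (((r * f * r) : Equiv.Perm (Fin n)) i).val i.val) r]
    rw [← hf]
    congr 1
    funext i
    show Nat.dist ((r (f (r (r i)))) : ℕ) ((r i) : ℕ) = Nat.dist ((f i) : ℕ) (i : ℕ)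
    rw [hrr' i, hrapp, hrapp]
    exact dist_rev (f i) i
  have h0 : (0 : ℕ) < n := by omega
  have h1 : (1 : ℕ) < n := by omega
  apply aux_four_dvd (fun f => f⁻¹) (fun f => r * f * r)
  · intro f
    show f⁻¹⁻¹ = f
    exact inv_inv f
  · intro f
    show r * (r * f * r) * r = f
    rw [show r * (r * f * r) * r = (r * r) * f * (r * r) by group, hrr, one_mul, mul_one]
  · intro f
    show (r * f * r)⁻¹ = r * f⁻¹ * r
    rw [mul_inv_rev, mul_inv_rev, hrinv, mul_assoc]
  · intro f hf
    rw [Finset.mem_filter] at hf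
    exact Finset.mem_filter.mpr ⟨Finset.mem_univ _, hPa f hf.2⟩
  · intro f hf
    rw [Finset.mem_filter] at hf
    exact Finset.mem_filter.mpr ⟨Finset.mem_univ _, hPb f hf.2⟩
  -- f⁻¹ ≠ f
  · intro f hf heq
    rw [Finset.mem_filter] at hf
    have hi := hinj f hf.2
    have hff : ∀ i, f (f i) = i := by
      intro i
      have h' : f (f⁻¹ i) = i := f.apply_symm_apply i
      rwa [heq] at h'
    have hfix : ∀ i, f i = i := by
      intro i
      apply hi
      show Nat.dist (f (f i)).val (f i).val = Nat.dist (f i).val i.val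
      rw [hff i, Nat.dist_comm]
    have heq2 : (⟨0, h0⟩ : Fin n) = ⟨1, h1⟩ := by
      apply hi
      show Nat.dist (f _).val _ = Nat.dist (f _).val _
      rw [hfix, hfix]
      simp [Nat.dist_self]
    simp [Fin.mk.injEq] at heq2
  -- r f r ≠ f
  · intro f hf heq
    rw [Finset.mem_filter] at hf
    have hi := hinj f hf.2
    have key : ∀ j : Fin n, f (Fin.rev j) = Fin.rev (f j) := by
      intro j
      have h' := congrFun (congrArg (fun g : Equiv.Perm (Fin n) => (g : Fin n → Fin n)) heq)
        (Fin.rev j)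
      simp only [Equiv.Perm.coe_mul, Function.comp_apply] at h'
      have hrj : r (Fin.rev j) = j := by rw [hrapp, Fin.rev_rev]
      rw [hrj] at h'
      rw [← h', hrapp]
    have hfix : ∀ j : Fin n, Fin.rev j = j := by
      intro j
      apply hi
      show Nat.dist (f (Fin.rev j)).val (Fin.rev j).val = Nat.dist (f j).val j.val
      rw [key j]
      exact dist_rev (f j) j
    have h' := congrArg Fin.val (hfix ⟨0, h0⟩)
    simp [Fin.val_rev] at h'
    omega
  -- (r f r)⁻¹ ≠ f
  · intro f hf heq
    rw [Finset.mem_filter] at hf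
    have hi := hinj f hf.2
    have heq' : f⁻¹ = r * f * r := by
      have h2 := congrArg (·⁻¹) heq
      simp only [inv_inv] at h2
      exact h2.symm
    have key : ∀ i : Fin n, f (Fin.rev (f i)) = Fin.rev i := by
      intro i
      have h' : (f⁻¹ : Equiv.Perm (Fin n)) (Fin.rev i) = Fin.rev (f i) := by
        rw [heq']
        show Fin.rev (f (Fin.rev (Fin.rev i))) = Fin.rev (f i)
        rw [Fin.rev_rev]
      have h2 := congrArg f h'
      rw [Equiv.Perm.inv_def, Equiv.apply_symm_apply] at h2
      exact h2.symm
    have hfix : ∀ i : Fin n, f i = Fin.rev i := by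
      intro i
      have hri : Fin.rev (f i) = i := by
        apply hi
        show Nat.dist (f (Fin.rev (f i))).val (Fin.rev (f i)).val = Nat.dist (f i).val i.val
        rw [key i, dist_rev]
        exact Nat.dist_comm _ _
      have h2 := congrArg Fin.rev hri
      rwa [Fin.rev_rev] at h2
    have hlast : (n - 1) < n := by omega
    have heq2 : (⟨0, h0⟩ : Fin n) = ⟨n - 1, hlast⟩ := by
      apply hi
      show Nat.dist (f _).val _ = Nat.dist (f _).val _
      rw [hfix, hfix]
      simp only [Fin.val_rev, Nat.dist]
      omega
    have h' := congrArg Fin.val heq2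
    simp at h'
    omega
end

section
/- For every integer n > 2, the number of permutations γ of Z_n with γ(0) = 0 such that for every i ∈ Z_n \ {0} either γ(i) ≤ i or γ(i) ≤ (n−1) − i (i.e., the number of distinct permutation bases fixing 0 for graceful expansions of members of Z_n^{Z_n}) equals (⌊(n−1)/2⌋)! · (⌈(n−1)/2⌉)!. -/
open Finset

/-- Counting injections with nested constraints: if `S 0 ⊆ S 1 ⊆ …`, the number of
injective `f : Fin k → β` with `f i ∈ S i` is `∏ i < k, (|S i| - i)`. -/
theorem count_inj_nested {β : Type*} [DecidableEq β] [Fintype β]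
    (k : ℕ) (S : ℕ → Finset β) (hS : ∀ i, S i ⊆ S (i + 1)) :
    Fintype.card {f : Fin k → β // Function.Injective f ∧ ∀ i : Fin k, f i ∈ S i.val} =
      ∏ i ∈ Finset.range k, ((S i).card - i) := by
  induction k generalizing S with
  | zero =>
      rw [Finset.prod_range_zero, Fintype.card_eq_one_iff]
      refine ⟨⟨Fin.elim0, fun a => a.elim0, fun i => i.elim0⟩, ?_⟩
      rintro ⟨g, _⟩
      exact Subtype.ext (funext fun i => i.elim0)
  | succ k IH =>
      have hmono : ∀ a b : ℕ, a ≤ b → S a ⊆ S b :=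
        fun a b h => monotone_nat_of_le_succ hS h
      have E : {f : Fin (k+1) → β // Function.Injective f ∧ ∀ i : Fin (k+1), f i ∈ S i.val} ≃
          Σ x : {x // x ∈ S 0},
            {g : Fin k → β // Function.Injective g ∧
              ∀ i : Fin k, g i ∈ (fun m => (S (m+1)).erase x.1) i.val} := by
        refine ⟨fun f => ⟨⟨f.1 0, f.2.2 0⟩, ⟨fun i => f.1 i.succ,
            fun a b h => Fin.succ_injective _ (f.2.1 h),
            fun i => Finset.mem_erase.mpr
              ⟨fun hc => (Fin.succ_ne_zero i) (f.2.1 hc), by simpa using f.2.2 i.succ⟩⟩⟩,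
          fun p => ⟨Fin.cons p.1.1 p.2.1,
            Fin.cons_injective_iff.mpr
              ⟨by rintro ⟨i, hi⟩; exact (Finset.mem_erase.mp (p.2.2.2 i)).1 hi, p.2.2.1⟩,
            fun i => Fin.cases (by simpa using p.1.2)
              (fun j => by simp only [Fin.val_succ]; exact Finset.mem_of_mem_erase (p.2.2.2 j)) i⟩,
          fun f => Subtype.ext (Fin.cons_self_tail f.1), fun p => rfl⟩
      rw [Fintype.card_congr E, Fintype.card_sigma]
      have hx : ∀ x : {x // x ∈ S 0},
          Fintype.card {g : Fin k → β // Function.Injective g ∧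
              ∀ i : Fin k, g i ∈ (fun m => (S (m+1)).erase x.1) i.val} =
            ∏ i ∈ Finset.range k, ((S (i+1)).card - (i+1)) := by
        intro x
        rw [IH (fun m => (S (m+1)).erase x.1)
          (fun i => Finset.erase_subset_erase _ (hS (i+1)))]
        refine Finset.prod_congr rfl fun i _ => ?_
        rw [Finset.card_erase_of_mem (hmono 0 (i+1) (Nat.zero_le _) x.2)]
        omega
      simp_rw [hx]
      rw [Finset.sum_const, Finset.card_univ, Fintype.card_coe, smul_eq_mul,
        Finset.prod_range_succ']
      simp [Nat.mul_comm]

/-- For `n > 2`, the number of permutations `γ` of `Z_n` fixing `0` such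
that every `i ≠ 0` satisfies `γ(i) ≤ i` or `γ(i) ≤ (n−1) − i` (i.e. the number of distinct
permutation bases fixing `0` for graceful expansions of members of `Z_n^{Z_n}`) equals
`⌊(n−1)/2⌋! · ⌈(n−1)/2⌉!` (note `⌈(n−1)/2⌉ = n/2` in natural division). -/
theorem stmt_8 (n : ℕ) (hn : 2 < n) :
    Nat.card {γ : Equiv.Perm (Fin n) //
      γ ⟨0, by omega⟩ = ⟨0, by omega⟩ ∧
      ∀ i : Fin n, i ≠ ⟨0, by omega⟩ →
        ((γ i).val ≤ i.val ∨ (γ i).val ≤ (n - 1) - i.val)} =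
    Nat.factorial ((n - 1) / 2) * Nat.factorial (n / 2) := by
  have npos : 0 < n := by omega
  set T : ℕ → Finset (Fin n) := fun j => Finset.univ.filter
    (fun i : Fin n => n ≤ j + 1 ∨ (i.val ≠ 0 ∧ (n - 1 - j ≤ i.val ∨ i.val ≤ j))) with hT
  have memT : ∀ (j : ℕ) (i : Fin n),
      i ∈ T j ↔ (n ≤ j + 1 ∨ (i.val ≠ 0 ∧ (n - 1 - j ≤ i.val ∨ i.val ≤ j))) := by
    intro j i; simp [hT]
  -- the reversal map
  set rev : Fin n → Fin n := fun j => ⟨n - 1 - j.val, by omega⟩ with hrev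
  have revinj : Function.Injective rev := by
    intro a b h
    have := congrArg Fin.val h
    simp only [hrev] at this
    exact Fin.ext (by omega)
  have revrev : ∀ v : Fin n, rev (rev v) = v := by
    intro v; apply Fin.ext; simp only [hrev]; omega
  -- equivalence with nested-constraint injections
  have zeroKey : ∀ (f : Fin n → Fin n), Function.Injective f →
      (∀ j : Fin n, f j ∈ T j.val) → f (rev ⟨0, npos⟩) = ⟨0, npos⟩ := by
    intro f hinj hf
    have hsurj : Function.Surjective f := Finite.injective_iff_surjective.mp hinj
    obtain ⟨j, hj⟩ := hsurj ⟨0, npos⟩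
    have hjval : j.val = n - 1 := by
      by_contra hne
      have hmem := (memT j.val (f j)).mp (hf j)
      rw [hj] at hmem
      have : j.val < n := j.isLt
      rcases hmem with h' | h'
      · omega
      · exact h'.1 rfl
    have hj' : j = rev ⟨0, npos⟩ := by
      apply Fin.ext; simp only [hrev]; omega
    rw [← hj', hj]
  have mainKey : ∀ (f : Fin n → Fin n) (hinj : Function.Injective f)
      (hf : ∀ j : Fin n, f j ∈ T j.val)
      (hb : Function.Bijective fun v : Fin n => f (rev v)),
      (Equiv.ofBijective _ hb).symm ⟨0, npos⟩ = ⟨0, npos⟩ ∧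
      ∀ i : Fin n, i ≠ ⟨0, npos⟩ →
        (((Equiv.ofBijective _ hb).symm i).val ≤ i.val ∨
          ((Equiv.ofBijective _ hb).symm i).val ≤ (n - 1) - i.val) := by
    intro f hinj hf hb
    set e := Equiv.ofBijective _ hb with he
    have h0 : e.symm ⟨0, npos⟩ = ⟨0, npos⟩ := by
      rw [Equiv.symm_apply_eq]
      exact (zeroKey f hinj hf).symm
    refine ⟨h0, ?_⟩
    intro i hi
    set v := e.symm i with hv
    have hev : f (rev v) = i := e.apply_symm_apply i
    have hmem := (memT (rev v).val i).mp (hev ▸ hf (rev v))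
    have hrv : (rev v).val = n - 1 - v.val := rfl
    rw [hrv] at hmem
    have hvn : v.val < n := v.isLt
    have hin : i.val < n := i.isLt
    rcases hmem with h | h
    · exfalso
      have hv0 : v = ⟨0, npos⟩ := Fin.ext (show v.val = 0 by omega)
      have hi0 : i = f (rev ⟨0, npos⟩) := by rw [← hev, hv0]
      rw [zeroKey f hinj hf] at hi0
      exact hi hi0
    · obtain ⟨_, h2⟩ := h
      show v.val ≤ i.val ∨ v.val ≤ (n - 1) - i.val
      rcases h2 with h2 | h2
      · omega
      · omega
  have E : {γ : Equiv.Perm (Fin n) //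
      γ ⟨0, by omega⟩ = ⟨0, by omega⟩ ∧
      ∀ i : Fin n, i ≠ ⟨0, by omega⟩ →
        ((γ i).val ≤ i.val ∨ (γ i).val ≤ (n - 1) - i.val)} ≃
      {f : Fin n → Fin n // Function.Injective f ∧ ∀ j : Fin n, f j ∈ T j.val} := by
    have memKey : ∀ (γp : {γ : Equiv.Perm (Fin n) //
        γ ⟨0, npos⟩ = ⟨0, npos⟩ ∧
        ∀ i : Fin n, i ≠ ⟨0, npos⟩ →
          ((γ i).val ≤ i.val ∨ (γ i).val ≤ (n - 1) - i.val)}) (j : Fin n),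
        γp.1.symm (rev j) ∈ T j.val := by
      intro γp j
      rw [memT]
      by_cases h1 : n ≤ j.val + 1
      · exact Or.inl h1
      · refine Or.inr ?_
        set i := γp.1.symm (rev j) with hi
        have hγi : γp.1 i = rev j := γp.1.apply_symm_apply _
        have hi0 : i ≠ ⟨0, npos⟩ := by
          intro h0
          rw [h0, γp.2.1] at hγi
          have := congrArg Fin.val hγi
          simp only [hrev] at this
          omega
        have hc := γp.2.2 i hi0
        rw [hγi] at hc
        have hival : i.val ≠ 0 := by
          intro h0; exact hi0 (Fin.ext h0)
        refine ⟨hival, ?_⟩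
        have hjv : (rev j).val = n - 1 - j.val := rfl
        rw [hjv] at hc
        have hb1 : i.val < n := i.isLt
        have hb2 : j.val < n := j.isLt
        rcases hc with h | h
        · omega
        · omega
    refine ⟨fun γp => ⟨fun j => γp.1.symm (rev j),
        fun a b h => revinj (γp.1.symm.injective h), memKey γp⟩,
      fun fp => ⟨(Equiv.ofBijective (fun v => fp.1 (rev v))
          (Finite.injective_iff_bijective.mp (fp.2.1.comp revinj))).symm,
        mainKey fp.1 fp.2.1 fp.2.2 _⟩, ?_, ?_⟩
    · intro γp
      apply Subtype.ext
      show (Equiv.ofBijective _ _).symm = γp.1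
      apply Equiv.ext
      intro x
      rw [Equiv.symm_apply_eq]
      show x = γp.1.symm (rev (rev (γp.1 x)))
      rw [revrev, Equiv.symm_apply_apply]
    · intro fp
      apply Subtype.ext
      funext j
      show (Equiv.ofBijective (fun v => fp.1 (rev v)) _).symm.symm (rev j) = fp.1 j
      rw [Equiv.symm_symm]
      show fp.1 (rev (rev j)) = fp.1 j
      rw [revrev]
  rw [Nat.card_congr E, Nat.card_eq_fintype_card]
  have chainT : ∀ j, T j ⊆ T (j + 1) := by
    intro j i hi
    rw [memT] at hi ⊢
    omega
  rw [count_inj_nested n T chainT]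
  -- compute each factor
  have cardT : ∀ j < n, (T j).card - j =
      (if n ≤ j + 1 then 1 else if n ≤ 2*j+1 then n-1-j else j+1) := by
    intro j hj
    by_cases h1 : n ≤ j + 1
    · have hTu : T j = Finset.univ := by
        ext i; rw [memT]; simp [h1]
      rw [hTu, Finset.card_univ, Fintype.card_fin, if_pos h1]
      omega
    · have hsub : ∀ m ∈ Finset.Icc 1 j ∪ Finset.Icc (n-1-j) (n-1), m < n := by
        intro m hm
        simp only [Finset.mem_union, Finset.mem_Icc] at hm
        omega
      have hTj : T j = (Finset.Icc 1 j ∪ Finset.Icc (n-1-j) (n-1)).attachFin hsub := by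
        ext i
        rw [memT, Finset.mem_attachFin]
        simp only [Finset.mem_union, Finset.mem_Icc]
        have := i.isLt
        omega
      rw [hTj, Finset.card_attachFin, if_neg h1]
      by_cases h2 : n ≤ 2*j+1
      · have hun : Finset.Icc 1 j ∪ Finset.Icc (n-1-j) (n-1) = Finset.Icc 1 (n-1) := by
          ext m
          simp only [Finset.mem_union, Finset.mem_Icc]
          omega
        rw [hun, Nat.card_Icc, if_pos h2]
        omega
      · have hd : Disjoint (Finset.Icc 1 j) (Finset.Icc (n-1-j) (n-1)) := by
          rw [Finset.disjoint_left]
          intro m hm hm'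
          simp only [Finset.mem_Icc] at hm hm'
          omega
        rw [Finset.card_union_of_disjoint hd, Nat.card_Icc, Nat.card_Icc, if_neg h2]
        omega
  rw [Finset.prod_congr rfl fun j hj => cardT j (Finset.mem_range.mp hj)]
  -- evaluate the product
  set hh : ℕ → ℕ := fun j => if n ≤ j + 1 then 1 else if n ≤ 2*j+1 then n-1-j else j+1 with hhh
  show ∏ j ∈ Finset.range n, hh j = _
  rw [Finset.range_eq_Ico,
    ← Finset.prod_Ico_consecutive hh (Nat.zero_le (n/2)) (Nat.div_le_self n 2)]
  have first : ∏ j ∈ Finset.Ico 0 (n/2), hh j = Nat.factorial (n / 2) := by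
    rw [← Finset.range_eq_Ico]
    rw [Finset.prod_congr rfl (fun j hj => ?_), Finset.prod_range_add_one_eq_factorial]
    have hj := Finset.mem_range.mp hj
    simp only [hhh]
    rw [if_neg (by omega), if_neg (by omega)]
  have second : ∏ j ∈ Finset.Ico (n/2) n, hh j = Nat.factorial ((n-1) / 2) := by
    have htop : Finset.Ico (n/2) n = Finset.Ico (n/2) ((n-1)+1) := by
      congr 1; omega
    rw [htop, Finset.prod_Ico_succ_top (by omega : n/2 ≤ n-1)]
    have hlast : hh (n-1) = 1 := by
      simp only [hhh]; rw [if_pos (by omega)]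
    rw [hlast, mul_one]
    have hstep1 : ∏ j ∈ Finset.Ico (n/2) (n-1), hh j
        = ∏ j ∈ Finset.Ico (n/2) (n-1), (n - 1 - j) := by
      refine Finset.prod_congr rfl fun j hj => ?_
      have hj := Finset.mem_Ico.mp hj
      simp only [hhh]
      rw [if_neg (by omega), if_pos (by omega)]
    rw [hstep1, Finset.prod_Ico_eq_prod_range]
    set m := n - 1 - n/2 with hm
    have hm2 : m = (n-1)/2 := by omega
    have hstep2 : ∏ t ∈ Finset.range m, (n - 1 - (n/2 + t))
        = ∏ t ∈ Finset.range m, (m - 1 - t + 1) := by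
      refine Finset.prod_congr rfl fun t ht => ?_
      have ht := Finset.mem_range.mp ht
      omega
    rw [hstep2, Finset.prod_range_reflect (fun t => t + 1) m,
      Finset.prod_range_add_one_eq_factorial, hm2]
  rw [first, second, Nat.mul_comm]
end

section
/- Let n > 0 and let γ be a permutation of Z_n with γ(0) = 0. Then the number of functions f : Z_n → Z_n satisfying |f(i) − i| = γ(i) for all i ∈ Z_n (all of which have gracefully labeled graphs G_f) is at most 2^{⌈(n−1)/2⌉}. Moreover, for γ = id this number equals exactly 2^{⌊(n−1)/2⌋}, so the bound is attained by γ = id whenever n is odd. -/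
open Finset

private lemma cardS_le (n : ℕ) (i : Fin n) (d : ℕ) :
    Nat.card {x : Fin n // Nat.dist x.val i.val = d} ≤
      if 0 < d ∧ 2 * d < n then 2 else 1 := by
  classical
  rw [Nat.card_eq_fintype_card, Fintype.card_subtype]
  have h2 : (univ.filter fun x : Fin n => Nat.dist x.val i.val = d).card ≤ 2 := by
    calc (univ.filter fun x : Fin n => Nat.dist x.val i.val = d).card
        ≤ ({i.val + d, i.val - d} : Finset ℕ).card := by
          refine Finset.card_le_card_of_injOn Fin.val ?_ ?_
          · intro a ha
            simp only [mem_coe, mem_filter, mem_univ, true_and] at ha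
            have := a.isLt
            simp only [mem_coe, mem_insert, mem_singleton]
            simp [Nat.dist] at ha
            omega
          · exact fun a _ b _ h => Fin.val_injective h
      _ ≤ 2 := (Finset.card_insert_le _ _).trans (by simp)
  split_ifs with h
  · exact h2
  · apply Finset.card_le_one.mpr
    intro a ha b hb
    simp only [mem_filter, mem_univ, true_and] at ha hb
    have hai := a.isLt
    have hbi := b.isLt
    have hii := i.isLt
    simp [Nat.dist] at ha hb
    apply Fin.ext
    omega

private lemma cardS_id (n : ℕ) (i : Fin n) :
    Nat.card {x : Fin n // Nat.dist x.val i.val = i.val} =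
      if 0 < i.val ∧ 2 * i.val < n then 2 else 1 := by
  classical
  have hn : 0 < n := i.pos
  rw [Nat.card_eq_fintype_card, Fintype.card_subtype]
  split_ifs with h
  · have hset : (univ.filter fun x : Fin n => Nat.dist x.val i.val = i.val)
        = {⟨0, hn⟩, ⟨2 * i.val, by omega⟩} := by
      ext x
      have hx := x.isLt
      have hi := i.isLt
      simp only [Finset.mem_filter, Finset.mem_univ, true_and]
      simp [Nat.dist, Fin.ext_iff]
      omega
    rw [hset, Finset.card_insert_of_notMem, Finset.card_singleton]
    simp only [Finset.mem_singleton, Fin.ext_iff]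
    omega
  · have hset : (univ.filter fun x : Fin n => Nat.dist x.val i.val = i.val)
        = {⟨0, hn⟩} := by
      ext x
      have hx := x.isLt
      have hi := i.isLt
      simp only [Finset.mem_filter, Finset.mem_univ, true_and]
      simp [Nat.dist, Fin.ext_iff]
      omega
    rw [hset, Finset.card_singleton]

/-- Let `γ` be a permutation of `Z_n` with `γ(0) = 0`. The number of
functions `f : Z_n → Z_n` with `|f(i) − i| = γ(i)` for all `i` (all of which have gracefully
labeled graphs) is at most `2^{⌈(n−1)/2⌉}` (note `⌈(n−1)/2⌉ = n/2` in natural division);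
moreover for `γ = id` this number equals exactly `2^{⌊(n−1)/2⌋}`. -/
theorem stmt_9 (n : ℕ) (hn : 0 < n) (γ : Equiv.Perm (Fin n))
    (h0 : γ ⟨0, hn⟩ = ⟨0, hn⟩) :
    Nat.card {f : Fin n → Fin n // ∀ i, Nat.dist (f i).val i.val = (γ i).val} ≤ 2 ^ (n / 2) ∧
    (γ = Equiv.refl (Fin n) →
      Nat.card {f : Fin n → Fin n // ∀ i, Nat.dist (f i).val i.val = (γ i).val} =
        2 ^ ((n - 1) / 2)) := by
  classical
  have e : {f : Fin n → Fin n // ∀ i, Nat.dist (f i).val i.val = (γ i).val} ≃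
      (∀ i : Fin n, {x : Fin n // Nat.dist x.val i.val = (γ i).val}) :=
    { toFun := fun f i => ⟨f.1 i, f.2 i⟩
      invFun := fun g => ⟨fun i => (g i).1, fun i => (g i).2⟩
      left_inv := fun f => rfl
      right_inv := fun g => rfl }
  have hcard : Nat.card {f : Fin n → Fin n // ∀ i, Nat.dist (f i).val i.val = (γ i).val}
      = ∏ i : Fin n, Nat.card {x : Fin n // Nat.dist x.val i.val = (γ i).val} := by
    rw [Nat.card_congr e, Nat.card_pi]
  constructor
  · rw [hcard]
    clear hcard e
    calc ∏ i : Fin n, Nat.card {x : Fin n // Nat.dist x.val i.val = (γ i).val}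
        ≤ ∏ i : Fin n, (if 0 < (γ i).val ∧ 2 * (γ i).val < n then 2 else 1) := by
          exact Finset.prod_le_prod (fun i _ => Nat.zero_le _) (fun i _ => cardS_le n i (γ i).val)
      _ = ∏ v : Fin n, (if 0 < v.val ∧ 2 * v.val < n then 2 else 1) := by
          exact Equiv.prod_comp γ (fun v : Fin n => if 0 < v.val ∧ 2 * v.val < n then 2 else 1)
      _ = 2 ^ (univ.filter fun v : Fin n => 0 < v.val ∧ 2 * v.val < n).card := by
          rw [Finset.prod_ite, Finset.prod_const, Finset.prod_const, one_pow, mul_one]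
      _ ≤ 2 ^ (n / 2) := by
          apply Nat.pow_le_pow_right (by norm_num)
          calc (univ.filter fun v : Fin n => 0 < v.val ∧ 2 * v.val < n).card
              ≤ (Finset.Icc 1 (n / 2)).card := by
                refine Finset.card_le_card_of_injOn Fin.val ?_ ?_
                · intro a ha
                  simp only [mem_coe, mem_filter, mem_univ, true_and] at ha
                  simp only [mem_coe, Finset.mem_Icc]
                  omega
                · exact fun a _ b _ h => Fin.val_injective h
            _ = n / 2 := by rw [Nat.card_Icc]; omega
  · intro hγ
    subst hγ
    rw [hcard]
    clear hcard e
    simp only [Equiv.refl_apply]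
    have hcount : (univ.filter fun v : Fin n => 0 < v.val ∧ 2 * v.val < n).card
        = (n - 1) / 2 := by
      have himg : ((univ.filter fun v : Fin n => 0 < v.val ∧ 2 * v.val < n).image Fin.val)
          = Finset.Icc 1 ((n - 1) / 2) := by
        ext m
        simp only [Finset.mem_image, Finset.mem_filter, Finset.mem_univ, true_and,
          Finset.mem_Icc]
        constructor
        · rintro ⟨a, ⟨h1, h2⟩, rfl⟩
          have := a.isLt
          omega
        · intro hm
          have hmn : m < n := by omega
          refine ⟨⟨m, hmn⟩, ⟨?_, ?_⟩, rfl⟩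
          · show 0 < m
            omega
          · show 2 * m < n
            omega
      calc (univ.filter fun v : Fin n => 0 < v.val ∧ 2 * v.val < n).card
          = ((univ.filter fun v : Fin n => 0 < v.val ∧ 2 * v.val < n).image Fin.val).card := by
            exact (Finset.card_image_of_injective _ Fin.val_injective).symm
        _ = (Finset.Icc 1 ((n - 1) / 2)).card := by rw [himg]
        _ = (n - 1) / 2 := by rw [Nat.card_Icc]; omega
    calc ∏ i : Fin n, Nat.card {x : Fin n // Nat.dist x.val i.val = i.val}
        = ∏ i : Fin n, (if 0 < i.val ∧ 2 * i.val < n then 2 else 1) := by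
          exact Finset.prod_congr rfl fun i _ => cardS_id n i
      _ = 2 ^ (univ.filter fun v : Fin n => 0 < v.val ∧ 2 * v.val < n).card := by
          rw [Finset.prod_ite, Finset.prod_const, Finset.prod_const, one_pow, mul_one]
      _ = 2 ^ ((n - 1) / 2) := by rw [hcount]
end

section
/- For every n > 0 and every f : Z_n → Z_n, 1 ≤ min over permutations σ of Z_n of |{ |σfσ⁻¹(i) − i| : i ∈ Z_n }| ≤ 1 + ρ_f + ε_f, where ρ_f is the minimum number of non-loop directed edges whose deletion from G_f leaves a spanning subgraph whose non-loop edges, viewed as undirected edges, form a disjoint union of paths on the vertex set Z_n (loop edges being permitted to remain), and ε_f = 1 if f has a fixed point and ε_f = 0 otherwise. -/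
/-- The undirected simple graph on `Z_n` formed by the non-loop edges `{i, f(i)}` of the
functional directed graph `G_f` that survive the deletion of the edges indexed by `D`. -/
def remGraph {n : ℕ} (f : Fin n → Fin n) (D : Finset (Fin n)) : SimpleGraph (Fin n) where
  Adj a b := a ≠ b ∧ ∃ i, i ∉ D ∧ f i ≠ i ∧ s(i, f i) = s(a, b)
  symm := by
    constructor
    rintro a b ⟨hab, i, hiD, hif, he⟩
    exact ⟨hab.symm, i, hiD, hif, he.trans Sym2.eq_swap⟩
  loopless := ⟨fun a h => h.1 rfl⟩

/-- `rhoF f` is the minimum number of non-loop directed edges whose deletion from `G_f`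
leaves a spanning subgraph whose non-loop edges, viewed as undirected edges, form a
disjoint union of paths (a linear forest: acyclic with all degrees at most `2`) on `Z_n`,
loop edges being permitted to remain. -/
noncomputable def rhoF {n : ℕ} (f : Fin n → Fin n) : ℕ :=
  sInf {k : ℕ | ∃ D : Finset (Fin n), D.card = k ∧ (∀ i ∈ D, f i ≠ i) ∧
    (remGraph f D).IsAcyclic ∧ ∀ v, ((remGraph f D).neighborSet v).ncard ≤ 2}


section Aux
set_option linter.unusedSectionVars false
variable {V : Type*} [Fintype V] [DecidableEq V] {G : SimpleGraph V}


lemma walk_of_chain : ∀ (l : List V) (a : V), List.Chain G.Adj a l → (a :: l).Nodup →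
    ∀ b ∈ a :: l, ∃ w : G.Walk a b, w.IsPath ∧ w.support <+: (a :: l) := by
  intro l
  induction l with
  | nil =>
    intro a _ _ b hb
    simp only [List.mem_singleton] at hb
    subst hb
    exact ⟨.nil, by simp [SimpleGraph.Walk.isPath_def], by simp⟩
  | cons c t ih =>
    intro a hch hnd b hb
    rcases List.mem_cons.1 hb with rfl | hb'
    · exact ⟨.nil, by simp [SimpleGraph.Walk.isPath_def], by simp⟩
    · replace hch : G.Adj a c ∧ List.Chain G.Adj c t := List.isChain_cons_cons.1 hch
      obtain ⟨w, hwp, hwpre⟩ := ih c hch.2 (List.nodup_cons.1 hnd).2 b hb'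
      refine ⟨.cons hch.1 w, ?_, ?_⟩
      · rw [SimpleGraph.Walk.isPath_def, SimpleGraph.Walk.support_cons]
        rw [List.nodup_cons]
        refine ⟨fun hmem => (List.nodup_cons.1 hnd).1 (hwpre.subset hmem), hwp.support_nodup⟩
      · rw [SimpleGraph.Walk.support_cons]
        exact List.cons_prefix_cons.2 ⟨rfl, hwpre⟩

/-- half of claim B: if b appears after a in the chain list, then [a,b] is infix. -/
lemma adj_infix_half (hac : G.IsAcyclic) {s t : List V} {a b : V}
    (hnd : (s ++ a :: t).Nodup) (hch : (s ++ a :: t).Chain' G.Adj)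
    (hab : G.Adj a b) (hb : b ∈ t) : [a, b] <:+: s ++ a :: t := by
  have hch' : (a :: t).Chain' G.Adj := (List.isChain_append.1 hch).2.1
  have hnd' : (a :: t).Nodup := hnd.sublist (List.sublist_append_right _ _)
  have hchain : List.Chain G.Adj a t := hch'
  obtain ⟨w, hwp, hwpre⟩ := walk_of_chain t a hchain hnd' b (List.mem_cons_of_mem _ hb)
  -- the single edge walk
  have hw2p : (SimpleGraph.Walk.cons hab .nil : G.Walk a b).IsPath := by
    rw [SimpleGraph.Walk.isPath_def]
    simp [hab.ne]
  have := SimpleGraph.isAcyclic_iff_path_unique.1 hac ⟨w, hwp⟩ ⟨_, hw2p⟩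
  have hsup : w.support = [a, b] := by
    have := congrArg (fun p : G.Path a b => (p : G.Walk a b).support) this
    simpa using this
  rw [hsup] at hwpre
  have : [b] <+: t := (List.cons_prefix_cons.1 hwpre).2
  obtain ⟨t', rfl⟩ := this
  exact ⟨s, t', by simp⟩

lemma adj_infix (hac : G.IsAcyclic) (l : List V) (hnd : l.Nodup) (hch : l.Chain' G.Adj)
    {a b : V} (hab : G.Adj a b) (ha : a ∈ l) (hb : b ∈ l) :
    [a, b] <:+: l ∨ [b, a] <:+: l := by
  obtain ⟨s, t, rfl⟩ := List.append_of_mem ha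
  rcases List.mem_append.1 hb with hbs | hbt
  · -- b before a : use reversed list
    right
    have hrw : (s ++ a :: t).reverse = t.reverse ++ a :: s.reverse := by simp
    have h1 : (t.reverse ++ a :: s.reverse).Nodup := by rw [← hrw]; exact List.nodup_reverse.2 hnd
    have h2 : (t.reverse ++ a :: s.reverse).Chain' G.Adj := by
      rw [← hrw]; refine List.isChain_reverse.2 ?_; change List.IsChain (flip G.Adj) _
      have hflip : (flip G.Adj) = G.Adj := by
        funext x y; exact propext ⟨fun h => h.symm, fun h => h.symm⟩
      rw [hflip]; exact hch
    have hb' : b ∈ s.reverse := by simpa using hbs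
    have hinf := (adj_infix_half hac h1 h2 hab hb').reverse
    rw [← hrw, List.reverse_reverse] at hinf
    simpa using hinf
  · rcases List.mem_cons.1 hbt with rfl | hbt'
    · exact absurd rfl hab.ne
    · exact Or.inl (adj_infix_half hac hnd hch hab hbt')

lemma closure_lemma (hdeg : ∀ v, (G.neighborSet v).ncard ≤ 2) (l : List V)
    (hnd : l.Nodup) (hch : l.Chain' G.Adj)
    (hhead : ∀ x c, l.head? = some c → G.Adj x c → x ∈ l)
    (hlast : ∀ x c, l.getLast? = some c → G.Adj x c → x ∈ l)
    {a b : V} (ha : a ∈ l) (hab : G.Adj a b) : b ∈ l := by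
  obtain ⟨s, t, rfl⟩ := List.append_of_mem ha
  rcases s.eq_nil_or_concat with rfl | ⟨s', u, rfl⟩
  · exact hhead b a rfl hab.symm
  simp only [List.concat_eq_append] at hnd hch hhead hlast ha ⊢
  rcases t.eq_nil_or_concat with rfl | ⟨t', c, rfl⟩
  · refine hlast b a ?_ hab.symm
    have h0 : s' ++ [u] ++ [a] = (s' ++ [u]) ++ [a] := by simp
    rw [h0, List.getLast?_concat]
  · simp only [List.concat_eq_append] at hnd hch hhead hlast ha ⊢
    -- a is interior with neighbors u and (head of t)
    obtain ⟨c0, t0, heq⟩ : ∃ c0 t0, t' ++ [c] = c0 :: t0 := by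
      rcases t' with _ | ⟨x, xs⟩
      · exact ⟨c, [], rfl⟩
      · exact ⟨x, xs ++ [c], by simp⟩
    rw [heq] at hnd hch hhead hlast ha ⊢
    have hsplit := List.isChain_append.1 hch
    have hadj2 : G.Adj a c0 := by
      have := hsplit.2.1
      rw [List.isChain_cons_cons] at this
      exact this.1
    have hadj1 : G.Adj u a := by
      have := hsplit.2.2 u (by rw [List.getLast?_concat]; rfl) a rfl
      exact this
    have huc : u ≠ c0 := by
      intro h
      have hu : u ∈ s' ++ [u] := by simp
      have hc : c0 ∈ a :: c0 :: t0 := by simp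
      exact (List.disjoint_of_nodup_append hnd) hu (h ▸ hc)
    have hsub : {u, c0} ⊆ G.neighborSet a := by
      intro x hx
      rcases hx with rfl | rfl
      · exact hadj1.symm
      · exact hadj2
    have hN : ({u, c0} : Set V) = G.neighborSet a := by
      apply Set.eq_of_subset_of_ncard_le hsub
      · calc (G.neighborSet a).ncard ≤ 2 := hdeg a
          _ = ({u, c0} : Set V).ncard := by rw [Set.ncard_pair huc]
    have hbN : b ∈ G.neighborSet a := hab
    rw [← hN] at hbN
    rcases hbN with rfl | rfl
    · simp
    · simp

lemma extend_lemma : ∀ (k : ℕ) (l : List V), l.Nodup → l.Chain' G.Adj →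
    Fintype.card V - l.length ≤ k →
    ∃ m : List V, m.Nodup ∧ m.Chain' G.Adj ∧ (∀ y ∈ l, y ∈ m) ∧
      m.getLast? = l.getLast? ∧
      (∀ x c, m.head? = some c → G.Adj x c → x ∈ m) := by
  intro k
  induction k with
  | zero =>
    intro l hnd hch hcard
    refine ⟨l, hnd, hch, fun y hy => hy, rfl, fun x c hc hadj => ?_⟩
    -- l contains everything
    have hlen : l.length = Fintype.card V := le_antisymm hnd.length_le_card (by omega)
    have : l.toFinset = Finset.univ := by
      apply Finset.eq_univ_of_card
      rw [List.toFinset_card_of_nodup hnd, hlen]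
    have : x ∈ l.toFinset := this ▸ Finset.mem_univ x
    simpa using this
  | succ k ih =>
    intro l hnd hch hcard
    by_cases hex : ∃ x c, l.head? = some c ∧ G.Adj x c ∧ x ∉ l
    · obtain ⟨x, c, hc, hadj, hxl⟩ := hex
      obtain ⟨l', rfl⟩ : ∃ l', l = c :: l' := by
        rcases l with _ | ⟨a, l'⟩
        · simp at hc
        · simp only [List.head?_cons, Option.some.injEq] at hc
          exact ⟨l', by rw [hc]⟩
      have hnd' : (x :: c :: l').Nodup := List.nodup_cons.2 ⟨hxl, hnd⟩
      have hch' : (x :: c :: l').Chain' G.Adj := List.isChain_cons_cons.2 ⟨hadj, hch⟩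
      have hcard' : Fintype.card V - (x :: c :: l').length ≤ k := by
        simp only [List.length_cons] at hcard ⊢
        omega
      obtain ⟨m, h1, h2, h3, h4, h5⟩ := ih (x :: c :: l') hnd' hch' hcard'
      refine ⟨m, h1, h2, fun y hy => h3 y (List.mem_cons_of_mem _ hy), ?_, h5⟩
      rw [h4, List.getLast?_cons_cons]
    · push_neg at hex
      exact ⟨l, hnd, hch, fun y hy => hy, rfl, fun x c hc hadj => hex x c hc hadj⟩

lemma exists_saturated (v : V) :
    ∃ m : List V, m.Nodup ∧ m.Chain' G.Adj ∧ v ∈ m ∧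
      (∀ x c, m.head? = some c → G.Adj x c → x ∈ m) ∧
      (∀ x c, m.getLast? = some c → G.Adj x c → x ∈ m) := by
  have hflip : (flip G.Adj) = G.Adj := by
    funext x y; exact propext ⟨fun h => h.symm, fun h => h.symm⟩
  obtain ⟨m1, h1, h2, h3, h4, h5⟩ := extend_lemma (G := G) (Fintype.card V) [v]
    (by simp) (List.isChain_singleton v) (by omega)
  obtain ⟨m2, g1, g2, g3, g4, g5⟩ := extend_lemma (G := G) (Fintype.card V) m1.reverse
    (List.nodup_reverse.2 h1) (List.isChain_reverse.2 (by change List.IsChain (flip G.Adj) _; rw [hflip]; exact h2))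
    (Nat.sub_le _ _)
  refine ⟨m2, g1, g2, g3 v (by simpa using h3 v (by simp)), g5, ?_⟩
  intro x c hc hadj
  rw [g4, List.getLast?_reverse] at hc
  exact g3 x (by simpa using h5 x c hc hadj)

lemma chain_mem_closed {s : Finset V} (hcl : ∀ a ∈ s, ∀ b, G.Adj a b → b ∈ s) :
    ∀ (l : List V) (a : V), List.Chain G.Adj a l → a ∈ s → ∀ y ∈ l, y ∈ s := by
  intro l
  induction l with
  | nil => intro a _ _ y hy; simp at hy
  | cons c t ih =>
    intro a hch ha y hy
    replace hch : G.Adj a c ∧ List.Chain G.Adj c t := List.isChain_cons_cons.1 hch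
    have hc : c ∈ s := hcl a ha c hch.1
    rcases List.mem_cons.1 hy with rfl | hy'
    · exact hc
    · exact ih c hch.2 hc y hy'

lemma mem_closed_of_chain' {s : Finset V} (hcl : ∀ a ∈ s, ∀ b, G.Adj a b → b ∈ s)
    (m : List V) (hch : m.Chain' G.Adj) {v : V} (hv : v ∈ m) (hvs : v ∈ s) :
    ∀ y ∈ m, y ∈ s := by
  have hflip : (flip G.Adj) = G.Adj := by
    funext x y; exact propext ⟨fun h => h.symm, fun h => h.symm⟩
  obtain ⟨p, t, rfl⟩ := List.append_of_mem hv
  intro y hy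
  rcases List.mem_append.1 hy with hyp | hyt
  · -- use reverse
    have h2 : (t.reverse ++ v :: p.reverse).Chain' G.Adj := by
      have : (p ++ v :: t).reverse = t.reverse ++ v :: p.reverse := by simp
      rw [← this]; refine List.isChain_reverse.2 ?_; change List.IsChain (flip G.Adj) _; rw [hflip]; exact hch
    have hchain : List.Chain G.Adj v p.reverse := (List.isChain_append.1 h2).2.1
    exact chain_mem_closed hcl p.reverse v hchain hvs y (by simpa using hyp)
  · rcases List.mem_cons.1 hyt with rfl | hyt'
    · exact hvs
    · have hchain : List.Chain G.Adj v t := (List.isChain_append.1 hch).2.1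
      exact chain_mem_closed hcl t v hchain hvs y hyt'

lemma listing_lemma (hac : G.IsAcyclic) (hdeg : ∀ v, (G.neighborSet v).ncard ≤ 2) :
    ∀ (s : Finset V), (∀ a ∈ s, ∀ b, G.Adj a b → b ∈ s) →
    ∃ l : List V, l.Nodup ∧ l.toFinset = s ∧
      ∀ a b, G.Adj a b → a ∈ s → ([a, b] <:+: l ∨ [b, a] <:+: l) := by
  intro s
  induction s using Finset.strongInduction with
  | _ s ih =>
    intro hcl
    rcases s.eq_empty_or_nonempty with rfl | ⟨v, hv⟩
    · exact ⟨[], by simp, by simp, fun a b _ ha => absurd ha (by simp)⟩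
    obtain ⟨m, hmnd, hmch, hvm, hhead, hlast⟩ := exists_saturated (G := G) v
    have hms : ∀ y ∈ m, y ∈ s := mem_closed_of_chain' hcl m hmch hvm hv
    -- m's vertex set is closed
    have hmcl : ∀ a ∈ m, ∀ b, G.Adj a b → b ∈ m := fun a ha b hab =>
      closure_lemma hdeg m hmnd hmch hhead hlast ha hab
    set t : Finset V := s \ m.toFinset with ht
    have htcl : ∀ a ∈ t, ∀ b, G.Adj a b → b ∈ t := by
      intro a ha b hab
      rw [ht, Finset.mem_sdiff] at ha ⊢
      refine ⟨hcl a ha.1 b hab, fun hbm => ha.2 ?_⟩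
      rw [List.mem_toFinset] at hbm ⊢
      exact hmcl b hbm a hab.symm
    have htss : t ⊂ s := by
      rw [ht]
      refine Finset.ssubset_iff_of_subset (Finset.sdiff_subset) |>.2 ⟨v, hv, ?_⟩
      simp [hvm]
    obtain ⟨l', h1, h2, h3⟩ := ih t htss htcl
    refine ⟨m ++ l', ?_, ?_, ?_⟩
    · refine List.Nodup.append hmnd h1 ?_
      intro y hym hyl'
      have : y ∈ t := h2 ▸ List.mem_toFinset.2 hyl'
      rw [ht, Finset.mem_sdiff, List.mem_toFinset] at this
      exact this.2 hym
    · rw [List.toFinset_append, h2, ht]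
      ext x
      simp only [Finset.mem_union, List.mem_toFinset, Finset.mem_sdiff]
      constructor
      · rintro (hx | ⟨hx, _⟩)
        · exact hms x hx
        · exact hx
      · intro hx
        by_cases hxm : x ∈ m
        · exact Or.inl hxm
        · exact Or.inr ⟨hx, hxm⟩
    · intro a b hab ha
      by_cases ham : a ∈ m
      · have hbm : b ∈ m := hmcl a ham b hab
        rcases adj_infix hac m hmnd hmch hab ham hbm with h | h
        · exact Or.inl (h.trans (m.prefix_append l').isInfix)
        · exact Or.inr (h.trans (m.prefix_append l').isInfix)
      · have hat : a ∈ t := by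
          rw [ht, Finset.mem_sdiff, List.mem_toFinset]
          exact ⟨ha, ham⟩
        rcases h3 a b hab hat with h | h
        · exact Or.inl (h.trans (List.suffix_append m l').isInfix)
        · exact Or.inr (h.trans (List.suffix_append m l').isInfix)

lemma perm_of_linear_forest {n : ℕ} {G : SimpleGraph (Fin n)} (hac : G.IsAcyclic)
    (hdeg : ∀ v, (G.neighborSet v).ncard ≤ 2) :
    ∃ τ : Equiv.Perm (Fin n), ∀ a b, G.Adj a b → Nat.dist (τ a).val (τ b).val = 1 := by
  obtain ⟨l, hnd, huniv, hinf⟩ := listing_lemma hac hdeg Finset.univ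
    (fun a _ b _ => Finset.mem_univ b)
  have hlen : l.length = n := by
    have := List.toFinset_card_of_nodup hnd
    rw [huniv] at this
    simpa using this.symm
  have hgetinj : Function.Injective l.get := List.nodup_iff_injective_get.1 hnd
  set g : Fin n → Fin n := fun k => l.get (Fin.cast hlen.symm k) with hg
  have hginj : Function.Injective g := by
    intro x y hxy
    have := hgetinj hxy
    simpa [Fin.ext_iff] using congrArg Fin.val this
  have hgbij : Function.Bijective g := Finite.injective_iff_bijective.1 hginj
  refine ⟨(Equiv.ofBijective g hgbij).symm, ?_⟩
  have key : ∀ a b : Fin n, [a, b] <:+: l → ∃ k : ℕ, ∃ h : k + 1 < n,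
      g ⟨k, Nat.lt_of_succ_lt h⟩ = a ∧ g ⟨k + 1, h⟩ = b := by
    intro a b hinfix
    obtain ⟨u, w, huw⟩ := hinfix
    have hlen2 : u.length + 1 < n := by
      have := congrArg List.length huw
      simp at this
      omega
    have huw' : l = u ++ ([a, b] ++ w) := by rw [← huw, List.append_assoc]
    refine ⟨u.length, hlen2, ?_, ?_⟩
    · have h1 : l[u.length]? = some a := by
        rw [huw', List.getElem?_append_right (le_refl _)]
        simp
      have h2 : l[u.length]? = some (g ⟨u.length, Nat.lt_of_succ_lt hlen2⟩) := by
        rw [List.getElem?_eq_getElem (by omega)]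
        rfl
      rw [h1] at h2
      exact Option.some_injective _ h2.symm
    · have h1 : l[u.length + 1]? = some b := by
        rw [huw', List.getElem?_append_right (by omega)]
        have h3 : u.length + 1 - u.length = 1 := by omega
        rw [h3]
        simp
      have h2 : l[u.length + 1]? = some (g ⟨u.length + 1, hlen2⟩) := by
        rw [List.getElem?_eq_getElem (by omega)]
        rfl
      rw [h1] at h2
      exact Option.some_injective _ h2.symm
  have dist_of : ∀ a b : Fin n, [a, b] <:+: l →
      Nat.dist ((Equiv.ofBijective g hgbij).symm a).val
        ((Equiv.ofBijective g hgbij).symm b).val = 1 := by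
    intro a b hinfix
    obtain ⟨k, hk, hka, hkb⟩ := key a b hinfix
    have h1 : (Equiv.ofBijective g hgbij).symm a = ⟨k, Nat.lt_of_succ_lt hk⟩ := by
      rw [Equiv.symm_apply_eq, Equiv.ofBijective_apply, hka]
    have h2 : (Equiv.ofBijective g hgbij).symm b = ⟨k + 1, hk⟩ := by
      rw [Equiv.symm_apply_eq, Equiv.ofBijective_apply, hkb]
    rw [h1, h2]
    simp [Nat.dist]
  intro a b hab
  rcases hinf a b hab (Finset.mem_univ a) with h | h
  · exact dist_of a b h
  · rw [Nat.dist_comm]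
    exact dist_of b a h

end Aux

lemma rhoF_spec {n : ℕ} (f : Fin n → Fin n) :
    ∃ D : Finset (Fin n), D.card = rhoF f ∧ (∀ i ∈ D, f i ≠ i) ∧
      (remGraph f D).IsAcyclic ∧ ∀ v, ((remGraph f D).neighborSet v).ncard ≤ 2 := by
  have hadj : ∀ a b, ¬ (remGraph f (Finset.univ.filter (fun i => f i ≠ i))).Adj a b := by
    rintro a b ⟨hab, i, hiD, hif, _⟩
    exact hiD (Finset.mem_filter.2 ⟨Finset.mem_univ i, hif⟩)
  have hne : {k : ℕ | ∃ D : Finset (Fin n), D.card = k ∧ (∀ i ∈ D, f i ≠ i) ∧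
      (remGraph f D).IsAcyclic ∧ ∀ v, ((remGraph f D).neighborSet v).ncard ≤ 2}.Nonempty := by
    refine ⟨(Finset.univ.filter (fun i => f i ≠ i)).card,
      Finset.univ.filter (fun i => f i ≠ i), rfl, ?_, ?_, ?_⟩
    · intro i hi
      exact (Finset.mem_filter.1 hi).2
    · intro v w hw
      cases w with
      | nil => exact hw.ne_nil rfl
      | cons h p => exact hadj _ _ h
    · intro v
      have : (remGraph f (Finset.univ.filter (fun i => f i ≠ i))).neighborSet v = ∅ :=
        Set.eq_empty_iff_forall_notMem.2 (fun x hx => hadj v x hx)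
      rw [this]
      simp
  exact Nat.sInf_mem hne

/-- For every `n > 0` and `f : Z_n → Z_n`,
`1 ≤ min_σ |{ |σfσ⁻¹(i) − i| : i ∈ Z_n }| ≤ 1 + ρ_f + ε_f`, where `ε_f = 1` iff `f` has a
fixed point. -/
theorem stmt_15 (n : ℕ) (hn : 0 < n) (f : Fin n → Fin n) :
    1 ≤ Finset.univ.inf' ⟨1, Finset.mem_univ 1⟩ (fun σ : Equiv.Perm (Fin n) =>
        (Finset.image (fun i => Nat.dist (σ (f (σ.symm i))).val i.val) Finset.univ).card) ∧
    Finset.univ.inf' ⟨1, Finset.mem_univ 1⟩ (fun σ : Equiv.Perm (Fin n) =>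
        (Finset.image (fun i => Nat.dist (σ (f (σ.symm i))).val i.val) Finset.univ).card) ≤
      1 + rhoF f + (if ∃ i, f i = i then 1 else 0) := by
  have hnonempty : (Finset.univ : Finset (Fin n)).Nonempty := ⟨⟨0, hn⟩, Finset.mem_univ _⟩
  constructor
  · apply Finset.le_inf'
    intro σ _
    rw [Nat.one_le_iff_ne_zero, ← Nat.pos_iff_ne_zero, Finset.card_pos]
    exact hnonempty.image _
  · obtain ⟨D, hDcard, hDnl, hDac, hDdeg⟩ := rhoF_spec f
    obtain ⟨τ, hτ⟩ := perm_of_linear_forest hDac hDdeg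
    set E : Finset ℕ := if ∃ i, f i = i then {0} else ∅ with hE
    set T : Finset ℕ := insert 1 ((D.image (fun i => Nat.dist (τ (f i)).val (τ i).val)) ∪ E)
      with hT
    have hsubset : Finset.univ.image (fun i => Nat.dist (τ (f (τ.symm i))).val i.val) ⊆ T := by
      intro x hx
      obtain ⟨i, _, rfl⟩ := Finset.mem_image.1 hx
      set v := τ.symm i with hv
      have hi : i = τ v := (Equiv.apply_symm_apply τ i).symm
      by_cases hfix : f v = v
      · have h0 : Nat.dist (τ (f (τ.symm i))).val i.val = 0 := by
          rw [hi]
          simp only [Equiv.symm_apply_apply, hfix]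
          exact Nat.dist_self _
        rw [h0, hT]
        refine Finset.mem_insert_of_mem (Finset.mem_union_right _ ?_)
        have hE0 : E = {0} := by rw [hE, if_pos ⟨v, hfix⟩]
        rw [hE0]
        exact Finset.mem_singleton_self 0
      · by_cases hvD : v ∈ D
        · rw [hT]
          refine Finset.mem_insert_of_mem (Finset.mem_union_left _ ?_)
          refine Finset.mem_image.2 ⟨v, hvD, ?_⟩
          rw [hi]
        · have hadj : (remGraph f D).Adj v (f v) := by
            refine ⟨fun h => hfix h.symm, v, hvD, hfix, rfl⟩
          have h1 : Nat.dist (τ (f (τ.symm i))).val i.val = 1 := by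
            rw [hi]
            simp only [Equiv.symm_apply_apply]
            rw [Nat.dist_comm]
            exact hτ v (f v) hadj
          rw [h1, hT]
          exact Finset.mem_insert_self _ _
    calc Finset.univ.inf' ⟨1, Finset.mem_univ 1⟩ (fun σ : Equiv.Perm (Fin n) =>
          (Finset.image (fun i => Nat.dist (σ (f (σ.symm i))).val i.val) Finset.univ).card)
        ≤ (Finset.univ.image (fun i => Nat.dist (τ (f (τ.symm i))).val i.val)).card :=
          Finset.inf'_le _ (Finset.mem_univ τ)
      _ ≤ T.card := Finset.card_le_card hsubset
      _ ≤ ((D.image (fun i => Nat.dist (τ (f i)).val (τ i).val)) ∪ E).card + 1 :=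
          Finset.card_insert_le _ _
      _ = 1 + ((D.image (fun i => Nat.dist (τ (f i)).val (τ i).val)) ∪ E).card :=
          Nat.add_comm _ _
      _ ≤ 1 + ((D.image (fun i => Nat.dist (τ (f i)).val (τ i).val)).card + E.card) := by
          exact Nat.add_le_add_left (Finset.card_union_le _ _) 1
      _ ≤ 1 + (D.card + E.card) := by
          exact Nat.add_le_add_left (Nat.add_le_add_right (Finset.card_image_le) _) 1
      _ = 1 + rhoF f + (if ∃ i, f i = i then 1 else 0) := by
          rw [hDcard, hE]
          split_ifs <;> simp <;> omega
end
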